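/- Define R : (−1, ∞) → ℝ by R(x) := 2(log(1+x) − x + x²/2)/x² for x ≠ 0 and R(0) := 0 (so that log(1+x) = x − x²/2 + (x²/2)R(x)). Then: (a) R is monotone increasing on (−1, ∞); (b) R(x) < 1 for every x > −1; (c) for every x with −1 < x ≤ −1/5 one has 0 < −R(x) < −2 log(1+x); and (d) R(x)/x → 2/3 as x → 0. -/

import Mathlib

open Real Filter

/-- The second-order Taylor remainder of `log (1+x)`:
`log (1+x) = x - x²/2 + (x²/2) * R x`. -/
noncomputable def taylorRemainderLog (x : ℝ) : ℝ :=
  if x = 0 then 0 else 2 * (Real.log (1 + x) - x + x ^ 2 / 2) / x ^ 2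

open Set

noncomputable def trlF (x : ℝ) : ℝ := Real.log (1 + x) - x + x ^ 2 / 2

lemma hasDerivAt_trlF {x : ℝ} (hx : -1 < x) : HasDerivAt trlF (x ^ 2 / (1 + x)) x := by
  have h : (0:ℝ) < 1 + x := by linarith
  have hlog : HasDerivAt (fun y : ℝ => Real.log (1 + y)) (1 / (1 + x)) x := by
    simpa using (((hasDerivAt_id x).const_add 1).log h.ne')
  have h2 : HasDerivAt trlF (1 / (1 + x) - 1 + 2 * x ^ 1 / 2) x := by
    exact (hlog.sub (hasDerivAt_id x)).add ((hasDerivAt_pow 2 x).div_const 2)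
  refine h2.congr_deriv ?_
  field_simp
  ring

/-- If `f 0 = 0` and `f' > 0` on `(0,∞)`, then `f > 0` on `(0,∞)`. -/
lemma trl_pos_right {f f' : ℝ → ℝ} (hd : ∀ x : ℝ, -1 < x → HasDerivAt f (f' x) x)
    (h0 : f 0 = 0) (hp : ∀ x : ℝ, 0 < x → 0 < f' x) : ∀ x : ℝ, 0 < x → 0 < f x := by
  have hm : StrictMonoOn f (Ici (0:ℝ)) := by
    apply strictMonoOn_of_deriv_pos (convex_Ici 0)
    · intro y hy
      exact (hd y (by simp only [mem_Ici] at hy; linarith)).continuousAt.continuousWithinAt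
    · intro y hy
      rw [interior_Ici, mem_Ioi] at hy
      rw [(hd y (by linarith)).deriv]
      exact hp y hy
  intro x hx
  have := hm (self_mem_Ici) (le_of_lt hx : (0:ℝ) ≤ x) hx
  rwa [h0] at this

lemma trl_neg_right {f f' : ℝ → ℝ} (hd : ∀ x : ℝ, -1 < x → HasDerivAt f (f' x) x)
    (h0 : f 0 = 0) (hp : ∀ x : ℝ, 0 < x → f' x < 0) : ∀ x : ℝ, 0 < x → f x < 0 := by
  have hm : StrictAntiOn f (Ici (0:ℝ)) := by
    apply strictAntiOn_of_deriv_neg (convex_Ici 0)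
    · intro y hy
      exact (hd y (by simp only [mem_Ici] at hy; linarith)).continuousAt.continuousWithinAt
    · intro y hy
      rw [interior_Ici, mem_Ioi] at hy
      rw [(hd y (by linarith)).deriv]
      exact hp y hy
  intro x hx
  have := hm (self_mem_Ici) (le_of_lt hx : (0:ℝ) ≤ x) hx
  rwa [h0] at this

/-- If `f 0 = 0` and `f' > 0` on `(a,0)` with `-1 ≤ a`, then `f < 0` on `(a,0)`. -/
lemma trl_neg_left {a : ℝ} (ha : -1 ≤ a) {f f' : ℝ → ℝ}
    (hd : ∀ x : ℝ, -1 < x → HasDerivAt f (f' x) x)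
    (h0 : f 0 = 0) (hp : ∀ x : ℝ, a < x → x < 0 → 0 < f' x) :
    ∀ x : ℝ, a < x → x < 0 → f x < 0 := by
  have hm : StrictMonoOn f (Ioc a (0:ℝ)) := by
    apply strictMonoOn_of_deriv_pos (convex_Ioc a 0)
    · intro y hy
      rw [mem_Ioc] at hy
      exact (hd y (by linarith [hy.1])).continuousAt.continuousWithinAt
    · intro y hy
      rw [interior_Ioc, mem_Ioo] at hy
      rw [(hd y (by linarith [hy.1])).deriv]
      exact hp y hy.1 hy.2
  intro x hx hx0
  have := hm (mem_Ioc.mpr ⟨hx, le_of_lt hx0⟩) (mem_Ioc.mpr ⟨by linarith, le_refl 0⟩) hx0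
  rwa [h0] at this

lemma trl_pos_left {a : ℝ} (ha : -1 ≤ a) {f f' : ℝ → ℝ}
    (hd : ∀ x : ℝ, -1 < x → HasDerivAt f (f' x) x)
    (h0 : f 0 = 0) (hp : ∀ x : ℝ, a < x → x < 0 → f' x < 0) :
    ∀ x : ℝ, a < x → x < 0 → 0 < f x := by
  have hm : StrictAntiOn f (Ioc a (0:ℝ)) := by
    apply strictAntiOn_of_deriv_neg (convex_Ioc a 0)
    · intro y hy
      rw [mem_Ioc] at hy
      exact (hd y (by linarith [hy.1])).continuousAt.continuousWithinAt
    · intro y hy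
      rw [interior_Ioc, mem_Ioo] at hy
      rw [(hd y (by linarith [hy.1])).deriv]
      exact hp y hy.1 hy.2
  intro x hx hx0
  have := hm (mem_Ioc.mpr ⟨hx, le_of_lt hx0⟩) (mem_Ioc.mpr ⟨by linarith, le_refl 0⟩) hx0
  rwa [h0] at this

lemma trlF_neg : ∀ x : ℝ, -1 < x → x < 0 → trlF x < 0 := by
  apply trl_neg_left le_rfl (fun x hx => hasDerivAt_trlF hx)
  · simp [trlF]
  · intro x hx hx0
    have h : (0:ℝ) < 1 + x := by linarith
    exact div_pos (by nlinarith) h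

/-- `g x = (1-x²) log(1+x) - x + x²/2 > 0` on `(-1,0)`. -/
lemma trl_g_pos : ∀ x : ℝ, -1 < x → x < 0 →
    0 < (1 - x ^ 2) * Real.log (1 + x) - x + x ^ 2 / 2 := by
  apply trl_pos_left le_rfl (f' := fun x => -2 * x * Real.log (1 + x))
  · intro x hx
    have h : (0:ℝ) < 1 + x := by linarith
    have hlog : HasDerivAt (fun y : ℝ => Real.log (1 + y)) (1 / (1 + x)) x := by
      simpa using (((hasDerivAt_id x).const_add 1).log h.ne')
    have h1 : HasDerivAt (fun y : ℝ => (1 - y ^ 2)) (-(2 * x ^ 1)) x := by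
      simpa using ((hasDerivAt_pow 2 x).const_sub 1)
    have h2 := ((h1.mul hlog).sub (hasDerivAt_id x)).add ((hasDerivAt_pow 2 x).div_const 2)
    refine h2.congr_deriv ?_
    field_simp
    ring
  · simp
  · intro x hx hx0
    have hlog : Real.log (1 + x) < 0 := Real.log_neg (by linarith) (by linarith)
    nlinarith

/-- `q x = x³/(1+x) - 2 F x`, sign of `q` = sign of `x`. -/
lemma hasDerivAt_trlq {x : ℝ} (hx : -1 < x) :
    HasDerivAt (fun y : ℝ => y ^ 3 / (1 + y) - 2 * trlF y) (x ^ 2 / (1 + x) ^ 2) x := by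
  have h : (0:ℝ) < 1 + x := by linarith
  have h1 : HasDerivAt (fun y : ℝ => y ^ 3 / (1 + y))
      ((3 * x ^ 2 * (1 + x) - x ^ 3 * 1) / (1 + x) ^ 2) x := by
    have := (hasDerivAt_pow 3 x).div ((hasDerivAt_id x).const_add 1) h.ne'
    exact this.congr_deriv (by norm_num)
  have h2 := h1.sub ((hasDerivAt_trlF hx).const_mul 2)
  refine h2.congr_deriv ?_
  field_simp
  ring

lemma trlq_pos : ∀ x : ℝ, 0 < x → 0 < x ^ 3 / (1 + x) - 2 * trlF x := by
  apply trl_pos_right (fun x hx => hasDerivAt_trlq hx)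
  · simp [trlF]
  · intro x hx
    have : (0:ℝ) < 1 + x := by linarith
    positivity

lemma trlq_neg : ∀ x : ℝ, -1 < x → x < 0 → x ^ 3 / (1 + x) - 2 * trlF x < 0 := by
  apply trl_neg_left le_rfl (fun x hx => hasDerivAt_trlq hx)
  · simp [trlF]
  · intro x hx hx0
    have h : (0:ℝ) < 1 + x := by linarith
    exact div_pos (by nlinarith) (by positivity)

/-- `G x = F x - x³/3 < 0` for `x ≠ 0`. -/
lemma hasDerivAt_trlG {x : ℝ} (hx : -1 < x) :
    HasDerivAt (fun y : ℝ => trlF y - y ^ 3 / 3) (-(x ^ 3) / (1 + x)) x := by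
  have h : (0:ℝ) < 1 + x := by linarith
  have h2 := (hasDerivAt_trlF hx).sub ((hasDerivAt_pow 3 x).div_const 3)
  refine h2.congr_deriv ?_
  field_simp
  ring

lemma trlG_neg_right : ∀ x : ℝ, 0 < x → trlF x - x ^ 3 / 3 < 0 := by
  apply trl_neg_right (fun x hx => hasDerivAt_trlG hx)
  · simp [trlF]
  · intro x hx
    have h : (0:ℝ) < 1 + x := by linarith
    have : (0:ℝ) < x ^ 3 := by positivity
    rw [div_neg_iff]
    right
    constructor <;> linarith

lemma trlG_neg_left : ∀ x : ℝ, -1 < x → x < 0 → trlF x - x ^ 3 / 3 < 0 := by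
  apply trl_neg_left le_rfl (fun x hx => hasDerivAt_trlG hx)
  · simp [trlF]
  · intro x hx hx0
    have h : (0:ℝ) < 1 + x := by linarith
    have h3 : x ^ 3 < 0 := Odd.pow_neg (by decide) hx0
    apply div_pos (by linarith) h

/-- `H x = F x - x³/3 + x⁴/4 > 0` for `x > 0`. -/
lemma trlH_pos : ∀ x : ℝ, 0 < x → 0 < trlF x - x ^ 3 / 3 + x ^ 4 / 4 := by
  apply trl_pos_right (f' := fun x => x ^ 4 / (1 + x))
  · intro x hx
    have h : (0:ℝ) < 1 + x := by linarith
    have h2 := (hasDerivAt_trlG hx).add ((hasDerivAt_pow 4 x).div_const 4)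
    refine h2.congr_deriv ?_
    field_simp
    ring
  · simp [trlF]
  · intro x hx
    have h : (0:ℝ) < 1 + x := by linarith
    positivity

/-- `P x = F x - x³/3 + x⁴ > 0` on `(-1/2, 0)`. -/
lemma trlP_pos : ∀ x : ℝ, -(1/2) < x → x < 0 → 0 < trlF x - x ^ 3 / 3 + x ^ 4 := by
  apply trl_pos_left (by norm_num) (f' := fun x => x ^ 3 * (4 * x + 3) / (1 + x))
  · intro x hx
    have h : (0:ℝ) < 1 + x := by linarith
    have h2 := (hasDerivAt_trlG hx).add (hasDerivAt_pow 4 x)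
    refine h2.congr_deriv ?_
    field_simp
    ring
  · simp [trlF]
  · intro x hx hx0
    have h : (0:ℝ) < 1 + x := by linarith
    have h3 : x ^ 3 < 0 := Odd.pow_neg (by decide) hx0
    have h4 : (0:ℝ) < 4 * x + 3 := by linarith
    exact div_neg_of_neg_of_pos (mul_neg_of_neg_of_pos h3 h4) h

lemma trlR_eq {x : ℝ} (hx : x ≠ 0) : taylorRemainderLog x = 2 * trlF x / x ^ 2 := by
  simp [taylorRemainderLog, trlF, hx]

lemma trl_tendsto :
    Tendsto (fun x : ℝ => taylorRemainderLog x / x) (nhdsWithin 0 {(0 : ℝ)}ᶜ)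
      (nhds (2 / 3)) := by
  rw [tendsto_iff_norm_sub_tendsto_zero]
  apply squeeze_zero' (g := fun x : ℝ => 2 * |x|)
  · filter_upwards with x using norm_nonneg _
  · have h1 : ∀ᶠ x : ℝ in nhdsWithin 0 {(0:ℝ)}ᶜ, |x| < 1/2 := by
      apply eventually_nhdsWithin_of_eventually_nhds
      have : ∀ᶠ x : ℝ in nhds 0, dist x 0 < 1/2 :=
        Metric.ball_mem_nhds 0 (by norm_num)
      filter_upwards [this] with x hx
      simpa [Real.dist_eq] using hx
    have h2 : ∀ᶠ x : ℝ in nhdsWithin 0 {(0:ℝ)}ᶜ, x ≠ 0 := by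
      filter_upwards [self_mem_nhdsWithin] with x hx
      simpa using hx
    filter_upwards [h1, h2] with x hx hx0
    have hx1 : -1 < x := by cases abs_lt.mp hx; linarith
    have hform : taylorRemainderLog x / x = 2 * trlF x / x ^ 3 := by
      rw [trlR_eq hx0, div_div, ← pow_succ]
    rw [Real.norm_eq_abs, hform, abs_le]
    rcases lt_or_gt_of_ne hx0 with hneg | hpos
    · -- x < 0 : 2/3 ≤ 2F/x³ ≤ 2/3 - 2x
      have hx3 : x ^ 3 < 0 := Odd.pow_neg (by decide) hneg
      have hG := trlG_neg_left x hx1 hneg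
      have hP := trlP_pos x (by cases abs_lt.mp hx; linarith) hneg
      constructor
      · -- -(2|x|) ≤ 2F/x³ - 2/3 ; in fact 0 ≤ lhs'
        have : 2 / 3 ≤ 2 * trlF x / x ^ 3 := by
          rw [le_div_iff_of_neg hx3]
          nlinarith
        have := abs_nonneg x
        linarith
      · have : 2 * trlF x / x ^ 3 ≤ 2 / 3 - 2 * x := by
          rw [div_le_iff_of_neg hx3]
          nlinarith
        rw [abs_of_neg hneg]
        linarith
    · -- x > 0 : 2/3 - x/2 ≤ 2F/x³ ≤ 2/3
      have hx3 : (0:ℝ) < x ^ 3 := by positivity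
      have hG := trlG_neg_right x hpos
      have hH := trlH_pos x hpos
      constructor
      · have : 2 / 3 - x / 2 ≤ 2 * trlF x / x ^ 3 := by
          rw [le_div_iff₀ hx3]
          nlinarith
        rw [abs_of_pos hpos]
        linarith
      · have : 2 * trlF x / x ^ 3 ≤ 2 / 3 := by
          rw [div_le_iff₀ hx3]
          nlinarith
        have := abs_nonneg x
        linarith
  · have : Tendsto (fun x : ℝ => 2 * |x|) (nhds 0) (nhds (2 * |(0:ℝ)|)) :=
      (continuous_abs.tendsto 0).const_mul 2
    simpa using this.mono_left nhdsWithin_le_nhds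

lemma trl_hasDerivAt_zero : HasDerivAt taylorRemainderLog (2 / 3) 0 := by
  rw [hasDerivAt_iff_tendsto_slope]
  have hs : slope taylorRemainderLog 0 = fun x : ℝ => taylorRemainderLog x / x := by
    funext y
    rw [slope_def_field]
    simp [taylorRemainderLog, div_eq_inv_mul]
  rw [hs]
  exact trl_tendsto

lemma trl_hasDerivAt_ne {x : ℝ} (hx : -1 < x) (hx0 : x ≠ 0) :
    HasDerivAt taylorRemainderLog
      ((2 * (x ^ 2 / (1 + x)) * x ^ 2 - 2 * trlF x * (2 * x ^ 1)) / (x ^ 2) ^ 2) x := by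
  have hform : HasDerivAt (fun y : ℝ => 2 * trlF y / y ^ 2)
      ((2 * (x ^ 2 / (1 + x)) * x ^ 2 - 2 * trlF x * (2 * x ^ 1)) / (x ^ 2) ^ 2) x :=
    ((hasDerivAt_trlF hx).const_mul 2).div (hasDerivAt_pow 2 x) (pow_ne_zero 2 hx0)
  apply hform.congr_of_eventuallyEq
  have hopen : {y : ℝ | y ≠ 0} ∈ nhds x := isOpen_ne.mem_nhds hx0
  filter_upwards [hopen] with y hy
  exact trlR_eq hy

lemma trl_monotone : MonotoneOn taylorRemainderLog (Set.Ioi (-1 : ℝ)) := by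
  have key : ∀ x : ℝ, -1 < x → 0 < deriv taylorRemainderLog x := by
    intro x hx
    by_cases hx0 : x = 0
    · rw [hx0, trl_hasDerivAt_zero.deriv]; norm_num
    · rw [(trl_hasDerivAt_ne hx hx0).deriv]
      apply div_pos _ (by positivity)
      have hnum : 2 * (x ^ 2 / (1 + x)) * x ^ 2 - 2 * trlF x * (2 * x ^ 1)
          = 2 * x * (x ^ 3 / (1 + x) - 2 * trlF x) := by ring
      rw [hnum]
      rcases lt_or_gt_of_ne hx0 with hneg | hpos
      · exact mul_pos_of_neg_of_neg (by linarith) (trlq_neg x hx hneg)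
      · exact mul_pos (by linarith) (trlq_pos x hpos)
  apply StrictMonoOn.monotoneOn
  apply strictMonoOn_of_deriv_pos (convex_Ioi (-1:ℝ))
  · intro y hy
    rw [mem_Ioi] at hy
    by_cases hy0 : y = 0
    · rw [hy0]; exact trl_hasDerivAt_zero.continuousAt.continuousWithinAt
    · exact (trl_hasDerivAt_ne hy hy0).continuousAt.continuousWithinAt
  · intro y hy
    rw [interior_Ioi, mem_Ioi] at hy
    exact key y hy


/-- Properties of the remainder `R`:
(a) `R` is monotone increasing on `(-1, ∞)`;
(b) `R x < 1` for every `x > -1`;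
(c) for `-1 < x ≤ -1/5`, `0 < -R x` and `-R x < -2 log (1+x)`;
(d) `R x / x → 2/3` as `x → 0`. -/
theorem taylorRemainderLog_properties :
    MonotoneOn taylorRemainderLog (Set.Ioi (-1 : ℝ)) ∧
    (∀ x : ℝ, -1 < x → taylorRemainderLog x < 1) ∧
    (∀ x : ℝ, -1 < x → x ≤ -(1 / 5) →
      0 < -taylorRemainderLog x ∧ -taylorRemainderLog x < -(2 * Real.log (1 + x))) ∧
    Tendsto (fun x : ℝ => taylorRemainderLog x / x) (nhdsWithin 0 {(0 : ℝ)}ᶜ)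
      (nhds (2 / 3)) := by
  refine ⟨trl_monotone, ?_, ?_, trl_tendsto⟩
  · -- (b)
    intro x hx
    by_cases hx0 : x = 0
    · simp [taylorRemainderLog, hx0]
    · rw [trlR_eq hx0, div_lt_one (by positivity)]
      have hlog : Real.log (1 + x) < x := by
        have := Real.log_lt_sub_one_of_pos (by linarith : (0:ℝ) < 1 + x)
          (by intro h; exact hx0 (by linarith))
        linarith
      simp only [trlF]
      linarith
  · -- (c)
    intro x hx hx5
    have hxneg : x < 0 := by linarith [hx5]
    have hx0 : x ≠ 0 := ne_of_lt hxneg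
    have hx2 : (0:ℝ) < x ^ 2 := by positivity
    have hF := trlF_neg x hx hxneg
    constructor
    · rw [trlR_eq hx0]
      have : 2 * trlF x / x ^ 2 < 0 := div_neg_of_neg_of_pos (by linarith) hx2
      linarith
    · rw [neg_lt_neg_iff, trlR_eq hx0, lt_div_iff₀ hx2]
      have hg := trl_g_pos x hx hxneg
      simp only [trlF]
      nlinarith [hg]
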